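/- arXiv:1409.2063 — 4 statements merged into one kernel-verified Lean document; each statement's English description precedes it below -/
import Mathlib

section
/- Let F : ℝ → ℝ be a degree-one lift and suppose the induced circle homeomorphism is conjugate to its inverse by an orientation-preserving circle homeomorphism; concretely, suppose there exist a degree-one lift H and an integer m such that H(F(x)) = F⁻¹(H(x)) + m for all x ∈ ℝ. Then twice the rotation number of F is an integer: 2·ρ(F) ∈ ℤ (so the rotation number of the induced circle map is 0 or 1/2 modulo 1). -/
/-- If a degree-one lift `F` induces a circle homeomorphism that is conjugate to
its inverse by an orientation-preserving circle homeomorphism (witnessed on lifts by a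
degree-one lift `H` and an integer `m` with `H (F x) = F⁻¹ (H x) + m`), then twice the rotation
(translation) number of `F` is an integer. -/
theorem stmt_2 (F : ℝ → ℝ) (hFmono : StrictMono F) (hFcont : Continuous F)
    (hFper : ∀ x : ℝ, F (x + 1) = F x + 1)
    (Finv : ℝ → ℝ) (hFinv₁ : Function.LeftInverse Finv F)
    (hFinv₂ : Function.RightInverse Finv F)
    (H : ℝ → ℝ) (hHmono : StrictMono H) (hHcont : Continuous H)
    (hHper : ∀ x : ℝ, H (x + 1) = H x + 1)
    (m : ℤ) (hconj : ∀ x : ℝ, H (F x) = Finv (H x) + m) :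
    ∃ k : ℤ,
      2 * CircleDeg1Lift.translationNumber ⟨⟨F, hFmono.monotone⟩, hFper⟩ = (k : ℝ) := by
  set Fhat : CircleDeg1Lift := ⟨⟨F, hFmono.monotone⟩, hFper⟩ with hFhat
  have hFinvmono : Monotone Finv := by
    intro x y hxy
    have := hFinv₂ x; have := hFinv₂ y
    exact hFmono.le_iff_le.mp (by rw [hFinv₂, hFinv₂]; exact hxy)
  have hFinvper : ∀ x : ℝ, Finv (x + 1) = Finv x + 1 := by
    intro x
    apply hFmono.injective
    rw [hFinv₂, hFper, hFinv₂]
  set Finvhat : CircleDeg1Lift := ⟨⟨Finv, hFinvmono⟩, hFinvper⟩ with hFinvhat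
  set Hhat : CircleDeg1Lift := ⟨⟨H, hHmono.monotone⟩, hHper⟩ with hHhat
  -- F is a unit with inverse Finvhat
  set Fu : CircleDeg1Liftˣ :=
    ⟨Fhat, Finvhat, CircleDeg1Lift.ext fun x => hFinv₂ x,
      CircleDeg1Lift.ext fun x => hFinv₁ x⟩ with hFu
  set T : CircleDeg1Lift := ↑(CircleDeg1Lift.translate (Multiplicative.ofAdd (m : ℝ))) with hT
  have hsemi : SemiconjBy Hhat Fhat (T * Finvhat) := by
    apply CircleDeg1Lift.ext
    intro x
    show H (F x) = m + Finv (H x)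
    rw [hconj x, add_comm]
  have h1 : Fhat.translationNumber = (T * Finvhat).translationNumber :=
    CircleDeg1Lift.translationNumber_eq_of_semiconjBy hsemi
  have hcomm : Commute T Finvhat := by
    apply CircleDeg1Lift.ext
    intro x
    show (m : ℝ) + Finvhat x = Finvhat ((m : ℝ) + x)
    rw [Finvhat.map_int_add m x]
  have h2 : (T * Finvhat).translationNumber =
      T.translationNumber + Finvhat.translationNumber :=
    CircleDeg1Lift.translationNumber_mul_of_commute hcomm
  have h3 : T.translationNumber = (m : ℝ) :=
    CircleDeg1Lift.translationNumber_translate (m : ℝ)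
  have h4 : Finvhat.translationNumber = -Fhat.translationNumber := by
    have := CircleDeg1Lift.translationNumber_units_inv Fu
    simpa [hFu] using this
  exact ⟨m, by linarith [h1, h2, h3, h4]⟩
end

section
/- Let F : ℝ → ℝ be a degree-one lift and suppose there exist a degree-one lift H and an integer m such that H(F(x)) = F⁻¹(H(x)) + m for all x ∈ ℝ (i.e. the induced circle homeomorphism f is conjugate to its inverse by an orientation-preserving circle homeomorphism). Then f² has a fixed point: there exist x ∈ ℝ and k ∈ ℤ with F(F(x)) = x + k. -/
open CircleDeg1Lift Function

/-- If a degree-one lift `F` induces a circle homeomorphism `f` that is conjugate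
to its inverse by an orientation-preserving circle homeomorphism, then `f²` has a fixed point:
there are `x ∈ ℝ` and `k ∈ ℤ` with `F (F x) = x + k`. -/
theorem stmt_3 (F : ℝ → ℝ) (hFmono : StrictMono F) (hFcont : Continuous F)
    (hFper : ∀ x : ℝ, F (x + 1) = F x + 1)
    (Finv : ℝ → ℝ) (hFinv₁ : Function.LeftInverse Finv F)
    (hFinv₂ : Function.RightInverse Finv F)
    (H : ℝ → ℝ) (hHmono : StrictMono H) (hHcont : Continuous H)
    (hHper : ∀ x : ℝ, H (x + 1) = H x + 1)
    (m : ℤ) (hconj : ∀ x : ℝ, H (F x) = Finv (H x) + m) :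
    ∃ (x : ℝ) (k : ℤ), F (F x) = x + k := by
  -- Lifts
  set Fl : CircleDeg1Lift := ⟨⟨F, hFmono.monotone⟩, hFper⟩ with hFl
  have hFinvmono : Monotone Finv := by
    intro a b hab
    have := hFmono.le_iff_le (a := Finv a) (b := Finv b)
    rw [hFinv₂, hFinv₂] at this
    exact this.1 hab
  have hFinvper : ∀ x : ℝ, Finv (x + 1) = Finv x + 1 := by
    intro x
    have : F (Finv x + 1) = x + 1 := by rw [hFper, hFinv₂]
    calc Finv (x + 1) = Finv (F (Finv x + 1)) := by rw [this]
    _ = Finv x + 1 := hFinv₁ _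
  set Fi : CircleDeg1Lift := ⟨⟨Finv, hFinvmono⟩, hFinvper⟩ with hFi
  set Hl : CircleDeg1Lift := ⟨⟨H, hHmono.monotone⟩, hHper⟩ with hHl
  -- F as a unit
  set Fu : CircleDeg1Liftˣ :=
    ⟨Fl, Fi, by ext x; exact hFinv₂ x, by ext x; exact hFinv₁ x⟩ with hFu
  -- the map x ↦ Finv x + m
  set G : CircleDeg1Lift := (translate (Multiplicative.ofAdd (m : ℝ))) * Fi with hG
  have hGapp : ∀ x, G x = Finv x + m := by
    intro x
    show (m : ℝ) + Finv x = Finv x + m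
    ring
  -- semiconjugacy: H ∘ F = G ∘ H
  have hsc : Function.Semiconj Hl Fl G := by
    intro x
    show H (F x) = G (H x)
    rw [hGapp, hconj]
  have h1 : Fl.translationNumber = G.translationNumber :=
    CircleDeg1Lift.translationNumber_eq_of_semiconj hsc
  -- τ G = m + τ Fi
  have hcomm : Commute ((translate (Multiplicative.ofAdd (m : ℝ))) : CircleDeg1Lift) Fi := by
    rw [CircleDeg1Lift.commute_iff_commute]
    intro x
    show (m : ℝ) + Fi x = Fi ((m : ℝ) + x)
    rw [Fi.map_int_add m x]
  have h2 : G.translationNumber = (m : ℝ) + Fi.translationNumber := by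
    rw [hG, CircleDeg1Lift.translationNumber_mul_of_commute hcomm,
      CircleDeg1Lift.translationNumber_translate]
  -- τ Fi = - τ Fl
  have h3 : Fi.translationNumber = -Fl.translationNumber := by
    have := CircleDeg1Lift.translationNumber_units_inv Fu
    simpa [hFu] using this
  have htau : Fl.translationNumber = m / 2 := by
    rw [h1, h2, h3] at *
    linarith [h1]
  -- τ (Fl^2) = m
  have hsq : (Fl ^ 2).translationNumber = (m : ℝ) := by
    rw [CircleDeg1Lift.translationNumber_pow, htau]
    push_cast
    ring
  have hcont2 : Continuous (Fl ^ 2 : CircleDeg1Lift) := Fl.continuous_pow hFcont 2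
  have := ((Fl ^ 2).translationNumber_eq_int_iff hcont2).1 hsq
  obtain ⟨x, hx⟩ := this
  refine ⟨x, m, ?_⟩
  have : (Fl ^ 2) x = F (F x) := by
    rw [pow_two]
    rfl
  rw [this] at hx
  exact hx
end

section
/- Let F : ℝ → ℝ be a degree-one lift inducing the orientation-preserving circle homeomorphism f of ℝ/ℤ, and suppose the fixed point set {z ∈ ℝ/ℤ : f(z) = z} is nonempty and finite. Then every finite Borel measure μ on ℝ/ℤ that is f-invariant (the pushforward of μ under f equals μ) and absolutely continuous with respect to Haar (Lebesgue) measure on ℝ/ℤ is the zero measure. -/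
open MeasureTheory Set Filter Topology

/-- If the circle homeomorphism `f` of `ℝ/ℤ` induced by a degree-one lift `F` has
a nonempty finite fixed point set, then every finite `f`-invariant Borel measure on `ℝ/ℤ` that
is absolutely continuous with respect to Haar (Lebesgue) measure is the zero measure. -/
theorem stmt_8 (F : ℝ → ℝ) (hFmono : StrictMono F) (hFcont : Continuous F)
    (hFper : ∀ x : ℝ, F (x + 1) = F x + 1)
    (f : AddCircle (1 : ℝ) → AddCircle (1 : ℝ))
    (hf : ∀ x : ℝ, f (x : AddCircle (1 : ℝ)) = ((F x : ℝ) : AddCircle (1 : ℝ)))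
    (hfix_ne : {z : AddCircle (1 : ℝ) | f z = z}.Nonempty)
    (hfix_fin : {z : AddCircle (1 : ℝ) | f z = z}.Finite)
    (μ : Measure (AddCircle (1 : ℝ))) [IsFiniteMeasure μ]
    (hinv : Measure.map f μ = μ)
    (hac : μ ≪ (volume : Measure (AddCircle (1 : ℝ)))) :
    μ = 0 := by
  -- integer coercion kills the quotient map
  have hcoeZ : ∀ (y : ℝ) (k : ℤ), ((y - (k : ℝ) : ℝ) : AddCircle (1 : ℝ)) = (y : AddCircle (1:ℝ)) := by
    intro y k
    have h : (((k : ℝ)) : AddCircle (1 : ℝ)) = 0 := by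
      rw [AddCircle.coe_eq_zero_iff]; exact ⟨k, by simp⟩
    calc ((y - (k:ℝ) : ℝ) : AddCircle (1:ℝ))
        = (y : AddCircle (1:ℝ)) - (((k:ℝ)) : AddCircle (1:ℝ)) := by rw [QuotientAddGroup.mk_sub]
      _ = (y : AddCircle (1:ℝ)) := by rw [h, sub_zero]
  -- a fixed point and a normalized lift G with G α = α
  obtain ⟨z₀, hz₀⟩ := hfix_ne
  obtain ⟨α, -, rfl⟩ := AddCircle.eq_coe_Ico z₀
  rw [Set.mem_setOf_eq, hf] at hz₀
  have : ((F α - α : ℝ) : AddCircle (1:ℝ)) = 0 := by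
    rw [QuotientAddGroup.mk_sub, hz₀, sub_self]
  rw [AddCircle.coe_eq_zero_iff] at this
  obtain ⟨k, hk⟩ := this
  have hk' : (k : ℝ) = F α - α := by simpa using hk
  set G : ℝ → ℝ := fun x => F x - k with hG
  have hGmono : StrictMono G := fun a b hab => by simp [hG]; exact hFmono hab
  have hGcont : Continuous G := hFcont.sub continuous_const
  have hGα : G α = α := by simp [hG]; linarith
  have hGα1 : G (α + 1) = α + 1 := by simp [hG, hFper α]; linarith
  have hGcoe : ∀ x : ℝ, ((G x : ℝ) : AddCircle (1:ℝ)) = ((F x : ℝ) : AddCircle (1:ℝ)) :=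
    fun x => hcoeZ (F x) k
  have hGIoc : ∀ x ∈ Ioc α (α + 1), G x ∈ Ioc α (α + 1) := by
    intro x hx
    constructor
    · rw [← hGα]; exact hGmono hx.1
    · rw [← hGα1]; exact hGmono.le_iff_le.mpr hx.2
  -- the coordinate map e : circle → (α, α+1]
  set e : AddCircle (1:ℝ) → ℝ := fun z => ((AddCircle.measurableEquivIoc 1 α z : Ioc α (α+1)) : ℝ)
    with he
  have he_meas : Measurable e :=
    measurable_subtype_coe.comp (AddCircle.measurableEquivIoc 1 α).measurable
  have he_mem : ∀ z, e z ∈ Ioc α (α + 1) := fun z => (AddCircle.measurableEquivIoc 1 α z).2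
  have he_mk : ∀ z, ((e z : ℝ) : AddCircle (1:ℝ)) = z := fun z =>
    (AddCircle.measurableEquivIoc 1 α).symm_apply_apply z
  have he_of_mem : ∀ x ∈ Ioc α (α+1), e ((x : ℝ) : AddCircle (1:ℝ)) = x := by
    intro x hx
    have h1 : (AddCircle.equivIoc 1 α) ((x : ℝ) : AddCircle (1:ℝ)) = ⟨x, hx⟩ := by
      rw [Equiv.apply_eq_iff_eq_symm_apply]; rfl
    show ((AddCircle.equivIoc 1 α ((x:ℝ) : AddCircle (1:ℝ)) : Ioc α (α+1)) : ℝ) = x; rw [h1]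
  -- conjugation : e ∘ f = G ∘ e
  have heG : ∀ z, e (f z) = G (e z) := by
    intro z
    have h1 : f z = ((G (e z) : ℝ) : AddCircle (1:ℝ)) := by
      rw [hGcoe, ← hf, he_mk]
    rw [h1, he_of_mem _ (hGIoc _ (he_mem z))]
  -- f is measurable
  have hf_eq : f = fun z => ((F (e z) : ℝ) : AddCircle (1:ℝ)) := by
    funext z; rw [← hf, he_mk]
  have hf_meas : Measurable f := by
    rw [hf_eq]
    exact ((AddCircle.continuous_mk' 1).comp hFcont).measurable.comp he_meas
  -- transported measure on ℝ
  set ν : Measure ℝ := Measure.map e μ with hν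
  have hν_apply : ∀ s : Set ℝ, MeasurableSet s → ν s = μ (e ⁻¹' s) := by
    intro s hs; rw [hν, Measure.map_apply he_meas hs]
  have hν_inv : Measure.map G ν = ν := by
    rw [hν, Measure.map_map hGcont.measurable he_meas]
    have : G ∘ e = e ∘ f := by funext z; exact (heG z).symm
    rw [this, ← Measure.map_map he_meas hf_meas, hinv]
  have hν_fin : ∀ s : Set ℝ, ν s ≠ ⊤ := by
    intro s
    exact ne_top_of_le_ne_top (measure_ne_top (Measure.map e μ) univ) (measure_mono (subset_univ s))
  -- invariance of the distribution function
  have hIoc : ∀ s : ℝ, ν (Ioc α (G s)) = ν (Ioc α s) := by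
    intro s
    conv_lhs => rw [← hν_inv]
    rw [Measure.map_apply hGcont.measurable measurableSet_Ioc]
    congr 1
    ext x
    simp only [mem_preimage, mem_Ioc]
    rw [← hGα, hGmono.lt_iff_lt, hGmono.le_iff_le, hGα]
  -- null arcs
  have harc1 : ∀ s : ℝ, α ≤ s → s < G s → ν (Ioc s (G s)) = 0 := by
    intro s hαs hsG
    have h := hIoc s
    rw [← Ioc_union_Ioc_eq_Ioc hαs hsG.le,
      measure_union (Set.Ioc_disjoint_Ioc_of_le le_rfl) measurableSet_Ioc] at h
    have := hν_fin (Ioc α s)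
    exact (ENNReal.add_right_inj this).mp (by rw [add_zero]; exact h)
  have harc2 : ∀ s : ℝ, α ≤ G s → G s < s → ν (Ioc (G s) s) = 0 := by
    intro s hαGs hGs
    have h := hIoc s
    rw [(by rw [Ioc_union_Ioc_eq_Ioc hαGs hGs.le] :
        Ioc α s = Ioc α (G s) ∪ Ioc (G s) s),
      measure_union (Set.Ioc_disjoint_Ioc_of_le le_rfl) measurableSet_Ioc] at h
    have := hν_fin (Ioc α (G s))
    exact (ENNReal.add_right_inj this).mp (by rw [add_zero]; exact h.symm)
  -- singletons are ν-null
  have hν_sing : ∀ x : ℝ, ν {x} = 0 := by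
    intro x
    rw [hν_apply _ (measurableSet_singleton x)]
    have hsub : e ⁻¹' {x} ⊆ {((x : ℝ) : AddCircle (1:ℝ))} := by
      intro z hz
      simp only [mem_preimage, mem_singleton_iff] at hz ⊢
      rw [← hz, he_mk]
    refine measure_mono_null hsub (hac ?_)
    have h := AddCircle.volume_closedBall (T := 1) (x := ((x : ℝ) : AddCircle (1:ℝ))) 0
    refine measure_mono_null (fun w hw => ?_) (by rw [h]; norm_num)
    simp_all [Metric.mem_closedBall]
  -- the fixed part is finite and null
  set S : Set ℝ := {x ∈ Ioo α (α+1) | G x = x} with hS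
  have hinj : Set.InjOn (fun x : ℝ => ((x : ℝ) : AddCircle (1:ℝ))) (Ioo α (α+1)) := by
    intro x hx y hy hxy
    have := congrArg e hxy
    rwa [he_of_mem _ (Ioo_subset_Ioc_self hx), he_of_mem _ (Ioo_subset_Ioc_self hy)] at this
  have hS_fin : S.Finite := by
    refine Set.Finite.of_finite_image (Set.Finite.subset hfix_fin ?_) (hinj.mono fun x hx => hx.1)
    rintro z ⟨x, ⟨hx, hGx⟩, rfl⟩
    simp only [mem_setOf_eq]
    rw [hf, ← hGcoe, hGx]
  have hS_null : ν S = 0 := by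
    have : S = ⋃ x ∈ S, {x} := by simp
    rw [this, (measure_biUnion_null_iff hS_fin.countable)]
    exact fun x _ => hν_sing x
  -- the non-fixed part is null by the local argument
  set N : Set ℝ := {x ∈ Ioo α (α+1) | G x ≠ x} with hN
  have hN_null : ν N = 0 := by
    refine measure_null_of_locally_null N fun y hy => ?_
    obtain ⟨⟨hy1, hy2⟩, hyne⟩ := hy
    rcases hyne.lt_or_gt with hlt | hgt
    · -- G y < y : find z > y with G z < y
      have h1 : ∀ᶠ z in 𝓝[>] y, G z < y :=
        eventually_nhdsWithin_of_eventually_nhds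
          ((hGcont.continuousAt).eventually_lt continuousAt_const hlt)
      have h2 : ∀ᶠ z in 𝓝[>] y, z < α + 1 :=
        eventually_nhdsWithin_of_eventually_nhds (Filter.Tendsto.eventually_lt_const hy2 Filter.tendsto_id)
      obtain ⟨z, ⟨hGzy, hzα1⟩, hyz⟩ := ((h1.and h2).and self_mem_nhdsWithin).exists
      have hαGz : α < G z := by rw [← hGα]; exact hGmono (hy1.trans hyz)
      have hGzz : G z < z := hGzy.trans hyz
      refine ⟨Ioo (G z) z, mem_nhdsWithin_of_mem_nhds (Ioo_mem_nhds hGzy hyz), ?_⟩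
      exact measure_mono_null Ioo_subset_Ioc_self (harc2 z hαGz.le hGzz)
    · -- y < G y : find z < y with y < G z
      have h1 : ∀ᶠ z in 𝓝[<] y, y < G z :=
        eventually_nhdsWithin_of_eventually_nhds
          ((continuousAt_const).eventually_lt (hGcont.continuousAt) hgt)
      have h2 : ∀ᶠ z in 𝓝[<] y, α < z :=
        eventually_nhdsWithin_of_eventually_nhds (Filter.Tendsto.eventually_const_lt hy1 Filter.tendsto_id)
      obtain ⟨z, ⟨hyGz, hαz⟩, hzy⟩ := ((h1.and h2).and self_mem_nhdsWithin).exists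
      have hzGz : z < G z := hzy.trans hyGz
      refine ⟨Ioo z (G z), mem_nhdsWithin_of_mem_nhds (Ioo_mem_nhds hzy hyGz), ?_⟩
      exact measure_mono_null Ioo_subset_Ioc_self (harc1 z hαz.le hzGz)
  -- assemble
  have hIoc_null : ν (Ioc α (α + 1)) = 0 := by
    have hsub : Ioc α (α+1) ⊆ S ∪ N ∪ {α + 1} := by
      intro x ⟨h1, h2⟩
      rcases eq_or_lt_of_le h2 with h2 | h2
      · exact Or.inr h2
      · rcases eq_or_ne (G x) x with hGx | hGx
        · exact Or.inl (Or.inl ⟨⟨h1, h2⟩, hGx⟩)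
        · exact Or.inl (Or.inr ⟨⟨h1, h2⟩, hGx⟩)
    exact measure_mono_null hsub
      (measure_union_null (measure_union_null hS_null hN_null) (hν_sing _))
  have hcompl : ν (Ioc α (α+1))ᶜ = 0 := by
    rw [hν_apply _ measurableSet_Ioc.compl]
    have : e ⁻¹' (Ioc α (α+1))ᶜ = ∅ := by
      ext z; simp [he_mem z]
    rw [this, measure_empty]
  have huniv : μ univ = 0 := by
    have h1 : ν univ = μ univ := by rw [hν_apply _ MeasurableSet.univ, preimage_univ]
    rw [← h1, ← Set.union_compl_self (Ioc α (α+1))]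
    exact measure_union_null hIoc_null hcompl
  exact Measure.measure_univ_eq_zero.mp huniv
end

section
/- Let F : ℝ → ℝ be a real analytic degree-one lift (analytic, strictly increasing, F(x + 1) = F(x) + 1 for all x), inducing the orientation-preserving circle homeomorphism f of ℝ/ℤ. Suppose: (i) f is conjugate to its inverse by an orientation-preserving circle homeomorphism, concretely there exist a degree-one lift H and an integer m with H(F(x)) = F⁻¹(H(x)) + m for all x ∈ ℝ; and (ii) there exists a nonzero finite Borel measure μ on ℝ/ℤ that is f-invariant (the pushforward of μ under f equals μ) and absolutely continuous with respect to Haar (Lebesgue) measure on ℝ/ℤ. Then f² is the identity map of ℝ/ℤ; equivalently, there exists k ∈ ℤ such that F(F(x)) = x + k for all x ∈ ℝ. -/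
open MeasureTheory

section StmtNineAux

private lemma coe_circle_eq_iff_stmt9 {x y : ℝ} :
    (x : AddCircle (1:ℝ)) = (y : AddCircle (1:ℝ)) ↔ ∃ k : ℤ, y = x + k := by
  rw [QuotientAddGroup.eq]
  simp only [AddSubgroup.mem_zmultiples_iff, zsmul_eq_mul, mul_one]
  constructor
  · rintro ⟨k, hk⟩; exact ⟨k, by linarith⟩
  · rintro ⟨k, rfl⟩; exact ⟨k, by ring⟩

private lemma per_add_int_stmt9 {ψ : ℝ → ℝ} (hm : Monotone ψ) (hper : ∀ x, ψ (x + 1) = ψ x + 1)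
    (x : ℝ) (n : ℤ) : ψ (x + n) = ψ x + n :=
  CircleDeg1Lift.map_add_int ⟨⟨ψ, hm⟩, hper⟩ x n

private lemma noAtoms_circle_stmt9 : NoAtoms (volume : Measure (AddCircle (1:ℝ))) := by
  constructor
  intro z
  refine QuotientAddGroup.induction_on z (fun y => ?_)
  have h1 := AddCircle.add_projection_respects_measure (T := 1) 0
    (U := {(y : AddCircle (1:ℝ))}) (measurableSet_singleton _)
  rw [h1]
  refine measure_mono_null (Set.inter_subset_left) ?_
  have hsub : (QuotientAddGroup.mk ⁻¹' {(y : AddCircle (1:ℝ))} : Set ℝ)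
      ⊆ Set.range (fun k : ℤ => y + k) := by
    intro x hx
    simp only [Set.mem_preimage, Set.mem_singleton_iff] at hx
    rw [QuotientAddGroup.eq] at hx
    simp only [AddSubgroup.mem_zmultiples_iff, zsmul_eq_mul, mul_one] at hx
    obtain ⟨k, hk⟩ := hx
    exact ⟨-k, by push_cast; linarith⟩
  exact measure_mono_null hsub ((Set.countable_range _).measure_zero _)

private lemma countable_zeros_stmt9 {φ : ℝ → ℝ} (hφ : ∀ x, AnalyticAt ℝ φ x)
    (hne : ¬ ∀ x, φ x = 0) : {x : ℝ | φ x = 0}.Countable := by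
  by_contra hunc
  have hclosed : IsClosed {x : ℝ | φ x = 0} :=
    isClosed_eq (continuous_iff_continuousAt.2 fun x => (hφ x).continuousAt) continuous_const
  obtain ⟨D, hD, hDne, hDsub⟩ :=
    exists_perfect_nonempty_of_isClosed_of_not_countable hclosed hunc
  obtain ⟨z, hz⟩ := hDne
  have hacc := accPt_iff_frequently.1 (hD.acc z hz)
  have hfreq : ∃ᶠ w in nhdsWithin z {z}ᶜ, φ w = 0 := by
    rw [frequently_nhdsWithin_iff]
    exact hacc.mono fun w hw => ⟨hDsub hw.2, hw.1⟩
  have heq : Set.EqOn φ 0 Set.univ :=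
    AnalyticOnNhd.eqOn_zero_of_preconnected_of_frequently_eq_zero
      (fun x _ => hφ x) isPreconnected_univ (Set.mem_univ z) hfreq
  exact hne fun x => heq (Set.mem_univ x)

private lemma exists_fixed_pt_stmt9
    (F : ℝ → ℝ) (hFmono : StrictMono F) (hFcont : Continuous F)
    (hFper : ∀ x : ℝ, F (x + 1) = F x + 1)
    (Finv : ℝ → ℝ) (hFinv₁ : Function.LeftInverse Finv F)
    (hFinv₂ : Function.RightInverse Finv F)
    (H : ℝ → ℝ) (hHmono : StrictMono H)
    (hHper : ∀ x : ℝ, H (x + 1) = H x + 1)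
    (m : ℤ) (hconj : ∀ x : ℝ, H (F x) = Finv (H x) + m) :
    ∃ x₀ : ℝ, F (F x₀) = x₀ + m := by
  have hFinvmono : Monotone Finv := by
    intro x y hxy
    by_contra hlt
    push_neg at hlt
    have := hFmono hlt
    rw [hFinv₂ x, hFinv₂ y] at this
    exact absurd hxy (not_le.2 this)
  have hFinvper : ∀ x : ℝ, Finv (x + 1) = Finv x + 1 := by
    intro x
    apply hFmono.injective
    rw [hFinv₂, hFper, hFinv₂]
  set a : CircleDeg1Lift := ⟨⟨F, hFmono.monotone⟩, hFper⟩ with ha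
  set b : CircleDeg1Lift := ⟨⟨Finv, hFinvmono⟩, hFinvper⟩ with hb
  set au : CircleDeg1Liftˣ :=
    { val := a, inv := b,
      val_inv := CircleDeg1Lift.ext fun x => hFinv₂ x,
      inv_val := CircleDeg1Lift.ext fun x => hFinv₁ x } with hau
  set h : CircleDeg1Lift := ⟨⟨H, hHmono.monotone⟩, hHper⟩ with hh
  set T : CircleDeg1Lift := ↑(CircleDeg1Lift.translate (Multiplicative.ofAdd (m : ℝ))) with hT
  have hsemi : Function.Semiconj ⇑h ⇑a ⇑(T * b) := by
    intro x
    show H (F x) = T (Finv (H x))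
    rw [hconj x]
    show Finv (H x) + m = (m:ℝ) + Finv (H x)
    ring
  have h1 : CircleDeg1Lift.translationNumber a
      = CircleDeg1Lift.translationNumber (T * b) :=
    CircleDeg1Lift.translationNumber_eq_of_semiconj hsemi
  have hcomm : Commute T b := by
    apply CircleDeg1Lift.ext
    intro x
    show T (b x) = b (T x)
    show (m:ℝ) + Finv x = Finv ((m:ℝ) + x)
    exact (b.map_int_add m x).symm
  have h2 : CircleDeg1Lift.translationNumber (T * b)
      = (m:ℝ) + CircleDeg1Lift.translationNumber b := by
    rw [CircleDeg1Lift.translationNumber_mul_of_commute hcomm]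
    rw [hT, CircleDeg1Lift.translationNumber_translate]
  have h3 : CircleDeg1Lift.translationNumber b
      = - CircleDeg1Lift.translationNumber a :=
    CircleDeg1Lift.translationNumber_units_inv au
  have hτ : CircleDeg1Lift.translationNumber (a * a) = (m:ℝ) := by
    rw [CircleDeg1Lift.translationNumber_mul_of_commute (Commute.refl a)]
    rw [h2, h3] at h1
    linarith
  have hcont2 : Continuous ⇑(a * a) := by
    show Continuous (F ∘ F)
    exact hFcont.comp hFcont
  obtain ⟨x₀, hx₀⟩ := ((a * a).translationNumber_eq_int_iff hcont2).1 hτ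
  exact ⟨x₀, hx₀⟩

private lemma wandering_null_up_stmt9
    (ψ : ℝ → ℝ) (hmono : StrictMono ψ) (hcont : Continuous ψ)
    (hper : ∀ x, ψ (x + 1) = ψ x + 1)
    (g : AddCircle (1:ℝ) → AddCircle (1:ℝ))
    (hg : ∀ x : ℝ, g (x : AddCircle (1:ℝ)) = ((ψ x : ℝ) : AddCircle (1:ℝ)))
    (hgmeas : Measurable g)
    (μ : Measure (AddCircle (1:ℝ))) [IsFiniteMeasure μ]
    (hinv : Measure.map g μ = μ)
    (x₁ : ℝ) (hx₁ : ψ x₁ = x₁)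
    (q : ℝ) (hq : q < ψ q) :
    μ (((↑) : ℝ → AddCircle (1:ℝ)) '' Set.Ioc q (ψ q)) = 0 := by
  by_contra hS0
  set Z : Set ℝ := {x : ℝ | ψ x = x} with hZ
  have hZclosed : IsClosed Z := isClosed_eq hcont continuous_id
  have hfix : ∀ n : ℤ, ψ (x₁ + n) = x₁ + n := by
    intro n; rw [per_add_int_stmt9 hmono.monotone hper, hx₁]
  have hmemA : x₁ + (⌈q - x₁⌉ : ℤ) ∈ Z ∩ Set.Ici q := by
    refine ⟨hfix _, ?_⟩
    have := Int.le_ceil (q - x₁)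
    simp only [Set.mem_Ici]; linarith
  set A : Set ℝ := Z ∩ Set.Ici q with hA
  have hAne : A.Nonempty := ⟨_, hmemA⟩
  have hAbdd : BddBelow A := ⟨q, fun y hy => hy.2⟩
  set z₂ : ℝ := sInf A with hz₂
  have hz₂A : z₂ ∈ A := (hZclosed.inter isClosed_Ici).csInf_mem hAne hAbdd
  have hz₂fix : ψ z₂ = z₂ := hz₂A.1
  have hz₂q : q < z₂ := by
    have hle : q ≤ z₂ := hz₂A.2
    rcases lt_or_eq_of_le hle with h | h
    · exact h
    · exfalso; rw [← h] at hz₂fix; exact absurd hz₂fix (ne_of_gt hq)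
  have hz₂le : z₂ ≤ q + 1 := by
    refine (csInf_le hAbdd hmemA).trans ?_
    have := Int.ceil_lt_add_one (q - x₁)
    linarith
  have hψqz₂ : ψ q < z₂ := by rw [← hz₂fix]; exact hmono hz₂q
  have hsign : ∀ y, q ≤ y → y < z₂ → y < ψ y := by
    intro y hqy hyz
    rcases lt_trichotomy y (ψ y) with h | h | h
    · exact h
    · exfalso
      have : y ∈ A := ⟨h.symm, hqy⟩
      exact absurd (csInf_le hAbdd this) (not_le.2 hyz)
    · exfalso
      have hsub : Set.Icc (ψ y - y) (ψ q - q) ⊆ (fun t => ψ t - t) '' Set.Icc q y :=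
        intermediate_value_Icc' hqy ((hcont.sub continuous_id).continuousOn)
      have h0mem : (0:ℝ) ∈ Set.Icc (ψ y - y) (ψ q - q) := ⟨by linarith, by linarith⟩
      obtain ⟨c, hc, hc0⟩ := hsub h0mem
      have hcfix : ψ c = c := by
        have : ψ c - c = 0 := hc0
        linarith
      have hcZ : c ∈ A := ⟨hcfix, hc.1⟩
      have := csInf_le hAbdd hcZ
      have : z₂ ≤ y := le_trans this hc.2
      linarith
  have horb : ∀ w, q < w → w ≤ ψ q → ∀ n : ℕ, ψ^[n + 1] w ∈ Set.Ioo (ψ q) z₂ := by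
    intro w hw1 hw2 n
    induction n with
    | zero =>
      constructor
      · exact hmono hw1
      · calc ψ w ≤ ψ (ψ q) := hmono.monotone hw2
          _ < z₂ := by rw [← hz₂fix]; exact hmono hψqz₂
    | succ n ih =>
      rw [Function.iterate_succ_apply']
      constructor
      · calc ψ q < ψ^[n+1] w := ih.1
          _ < ψ (ψ^[n+1] w) := hsign _ (le_of_lt (lt_trans hq ih.1)) ih.2
      · rw [← hz₂fix]; exact hmono ih.2
  have hSdecomp : (((↑) : ℝ → AddCircle (1:ℝ)) '' Set.Ioc q (ψ q))
      = (((↑) : ℝ → AddCircle (1:ℝ)) '' Set.Ioo q (ψ q)) ∪ {((ψ q : ℝ) : AddCircle (1:ℝ))} := by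
    rw [← Set.image_singleton, ← Set.image_union, Set.Ioo_union_right hq]
  have hSmeas : MeasurableSet (((↑) : ℝ → AddCircle (1:ℝ)) '' Set.Ioc q (ψ q)) := by
    rw [hSdecomp]
    exact ((QuotientAddGroup.isOpenMap_coe _ isOpen_Ioo).measurableSet).union
      (measurableSet_singleton _)
  have hcons : Conservative g μ :=
    (⟨hgmeas, hinv⟩ : MeasurePreserving g μ μ).conservative
  obtain ⟨x, hxS, n, hn0, hnS⟩ :=
    hcons.exists_mem_iterate_mem hSmeas.nullMeasurableSet hS0
  obtain ⟨w, hw, rfl⟩ := hxS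
  have hgn : ∀ (k : ℕ) (y : ℝ),
      g^[k] (y : AddCircle (1:ℝ)) = ((ψ^[k] y : ℝ) : AddCircle (1:ℝ)) := by
    intro k
    induction k with
    | zero => intro y; simp
    | succ k ih =>
      intro y
      rw [Function.iterate_succ_apply, Function.iterate_succ_apply, hg, ih]
  rw [hgn] at hnS
  obtain ⟨u, hu, huw⟩ := hnS
  obtain ⟨k, hk⟩ := coe_circle_eq_iff_stmt9.1 huw
  obtain ⟨n', rfl⟩ : ∃ n', n = n' + 1 :=
    ⟨n - 1, (Nat.succ_pred_eq_of_pos (Nat.pos_of_ne_zero hn0)).symm⟩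
  have hψn := horb w hw.1 hw.2 n'
  have hkpos : (0:ℝ) < (k:ℝ) := by
    have h1 := hψn.1
    have h2 := hu.2
    linarith [hk]
  have hkint : 1 ≤ k := Int.lt_iff_add_one_le.1 (by exact_mod_cast hkpos)
  have hk1 : (1:ℝ) ≤ (k:ℝ) := by exact_mod_cast hkint
  have := hψn.2
  have := hu.1
  linarith [hk, hz₂le]

private lemma wandering_null_down_stmt9
    (ψ : ℝ → ℝ) (hmono : StrictMono ψ) (hcont : Continuous ψ)
    (hper : ∀ x, ψ (x + 1) = ψ x + 1)
    (g : AddCircle (1:ℝ) → AddCircle (1:ℝ))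
    (hg : ∀ x : ℝ, g (x : AddCircle (1:ℝ)) = ((ψ x : ℝ) : AddCircle (1:ℝ)))
    (hgmeas : Measurable g)
    (μ : Measure (AddCircle (1:ℝ))) [IsFiniteMeasure μ]
    (hinv : Measure.map g μ = μ)
    (x₁ : ℝ) (hx₁ : ψ x₁ = x₁)
    (q : ℝ) (hq : ψ q < q) :
    μ (((↑) : ℝ → AddCircle (1:ℝ)) '' Set.Ico (ψ q) q) = 0 := by
  by_contra hS0
  set Z : Set ℝ := {x : ℝ | ψ x = x} with hZ
  have hZclosed : IsClosed Z := isClosed_eq hcont continuous_id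
  have hfix : ∀ n : ℤ, ψ (x₁ + n) = x₁ + n := by
    intro n; rw [per_add_int_stmt9 hmono.monotone hper, hx₁]
  have hmemA : x₁ + (⌊q - x₁⌋ : ℤ) ∈ Z ∩ Set.Iic q := by
    refine ⟨hfix _, ?_⟩
    have := Int.floor_le (q - x₁)
    simp only [Set.mem_Iic]; linarith
  set A : Set ℝ := Z ∩ Set.Iic q with hA
  have hAne : A.Nonempty := ⟨_, hmemA⟩
  have hAbdd : BddAbove A := ⟨q, fun y hy => hy.2⟩
  set z₁ : ℝ := sSup A with hz₁
  have hz₁A : z₁ ∈ A := (hZclosed.inter isClosed_Iic).csSup_mem hAne hAbdd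
  have hz₁fix : ψ z₁ = z₁ := hz₁A.1
  have hz₁q : z₁ < q := by
    have hle : z₁ ≤ q := hz₁A.2
    rcases lt_or_eq_of_le hle with h | h
    · exact h
    · exfalso; rw [h] at hz₁fix; exact absurd hz₁fix (ne_of_lt hq)
  have hz₁ge : q - 1 ≤ z₁ := by
    refine le_trans ?_ (le_csSup hAbdd hmemA)
    have := Int.lt_floor_add_one (q - x₁)
    linarith
  have hψqz₁ : z₁ < ψ q := by rw [← hz₁fix]; exact hmono hz₁q
  have hsign : ∀ y, z₁ < y → y ≤ q → ψ y < y := by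
    intro y hzy hyq
    rcases lt_trichotomy (ψ y) y with h | h | h
    · exact h
    · exfalso
      have : y ∈ A := ⟨h, hyq⟩
      exact absurd (le_csSup hAbdd this) (not_le.2 hzy)
    · exfalso
      have hsub : Set.Icc (ψ q - q) (ψ y - y) ⊆ (fun t => ψ t - t) '' Set.Icc y q :=
        intermediate_value_Icc' hyq ((hcont.sub continuous_id).continuousOn)
      have h0mem : (0:ℝ) ∈ Set.Icc (ψ q - q) (ψ y - y) := ⟨by linarith, by linarith⟩
      obtain ⟨c, hc, hc0⟩ := hsub h0mem
      have hcfix : ψ c = c := by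
        have : ψ c - c = 0 := hc0
        linarith
      have hcZ : c ∈ A := ⟨hcfix, hc.2⟩
      have := le_csSup hAbdd hcZ
      have : y ≤ z₁ := le_trans hc.1 this
      linarith
  have horb : ∀ w, ψ q ≤ w → w < q → ∀ n : ℕ, ψ^[n + 1] w ∈ Set.Ioo z₁ (ψ q) := by
    intro w hw1 hw2 n
    induction n with
    | zero =>
      constructor
      · calc z₁ = ψ z₁ := hz₁fix.symm
          _ < ψ w := hmono (lt_of_lt_of_le hψqz₁ hw1)
      · exact hmono hw2
    | succ n ih =>
      rw [Function.iterate_succ_apply']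
      constructor
      · calc z₁ = ψ z₁ := hz₁fix.symm
          _ < ψ (ψ^[n+1] w) := hmono ih.1
      · calc ψ (ψ^[n+1] w) < ψ^[n+1] w :=
            hsign _ ih.1 (le_of_lt (lt_trans ih.2 hq))
          _ < ψ q := ih.2
  have hSdecomp : (((↑) : ℝ → AddCircle (1:ℝ)) '' Set.Ico (ψ q) q)
      = (((↑) : ℝ → AddCircle (1:ℝ)) '' Set.Ioo (ψ q) q) ∪ {((ψ q : ℝ) : AddCircle (1:ℝ))} := by
    rw [← Set.image_singleton, ← Set.image_union, Set.Ioo_union_left hq]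
  have hSmeas : MeasurableSet (((↑) : ℝ → AddCircle (1:ℝ)) '' Set.Ico (ψ q) q) := by
    rw [hSdecomp]
    exact ((QuotientAddGroup.isOpenMap_coe _ isOpen_Ioo).measurableSet).union
      (measurableSet_singleton _)
  have hcons : Conservative g μ :=
    (⟨hgmeas, hinv⟩ : MeasurePreserving g μ μ).conservative
  obtain ⟨x, hxS, n, hn0, hnS⟩ :=
    hcons.exists_mem_iterate_mem hSmeas.nullMeasurableSet hS0
  obtain ⟨w, hw, rfl⟩ := hxS
  have hgn : ∀ (k : ℕ) (y : ℝ),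
      g^[k] (y : AddCircle (1:ℝ)) = ((ψ^[k] y : ℝ) : AddCircle (1:ℝ)) := by
    intro k
    induction k with
    | zero => intro y; simp
    | succ k ih =>
      intro y
      rw [Function.iterate_succ_apply, Function.iterate_succ_apply, hg, ih]
  rw [hgn] at hnS
  obtain ⟨u, hu, huw⟩ := hnS
  obtain ⟨k, hk⟩ := coe_circle_eq_iff_stmt9.1 huw
  obtain ⟨n', rfl⟩ : ∃ n', n = n' + 1 :=
    ⟨n - 1, (Nat.succ_pred_eq_of_pos (Nat.pos_of_ne_zero hn0)).symm⟩
  have hψn := horb w hw.1 hw.2 n'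
  have hkneg : (k:ℝ) < 0 := by
    have h1 := hψn.2
    have h2 := hu.1
    linarith [hk]
  have hkint : k ≤ -1 := by
    have : k < 0 := by exact_mod_cast hkneg
    omega
  have hkr : (k:ℝ) ≤ -1 := by exact_mod_cast hkint
  have := hψn.1
  have := hu.2
  linarith [hk, hz₁ge]

end StmtNineAux

/-- A real analytic degree-one lift `F` inducing a circle homeomorphism `f` that
is (i) conjugate to its inverse by an orientation-preserving circle homeomorphism and
(ii) preserves a nonzero finite Borel measure absolutely continuous with respect to Haar
measure, satisfies `f² = id`; equivalently `F (F x) = x + k` for some fixed integer `k`. -/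
theorem stmt_9 (F : ℝ → ℝ) (hFan : ∀ x : ℝ, AnalyticAt ℝ F x)
    (hFmono : StrictMono F) (hFcont : Continuous F)
    (hFper : ∀ x : ℝ, F (x + 1) = F x + 1)
    (f : AddCircle (1 : ℝ) → AddCircle (1 : ℝ))
    (hf : ∀ x : ℝ, f (x : AddCircle (1 : ℝ)) = ((F x : ℝ) : AddCircle (1 : ℝ)))
    (Finv : ℝ → ℝ) (hFinv₁ : Function.LeftInverse Finv F)
    (hFinv₂ : Function.RightInverse Finv F)
    (H : ℝ → ℝ) (hHmono : StrictMono H) (hHcont : Continuous H)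
    (hHper : ∀ x : ℝ, H (x + 1) = H x + 1)
    (m : ℤ) (hconj : ∀ x : ℝ, H (F x) = Finv (H x) + m)
    (μ : Measure (AddCircle (1 : ℝ))) [IsFiniteMeasure μ] (hμ : μ ≠ 0)
    (hinv : Measure.map f μ = μ)
    (hac : μ ≪ (volume : Measure (AddCircle (1 : ℝ)))) :
    (∀ z : AddCircle (1 : ℝ), f (f z) = z) ∧ ∃ k : ℤ, ∀ x : ℝ, F (F x) = x + k := by
  obtain ⟨x₀, hx₀⟩ := exists_fixed_pt_stmt9 F hFmono hFcont hFper Finv hFinv₁ hFinv₂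
    H hHmono hHper m hconj
  by_cases hzero : ∀ x : ℝ, F (F x) = x + (m:ℝ)
  · constructor
    · intro z
      refine QuotientAddGroup.induction_on z (fun x => ?_)
      rw [hf, hf, hzero x]
      exact coe_circle_eq_iff_stmt9.2 ⟨-m, by push_cast; ring⟩
    · exact ⟨m, hzero⟩
  · exfalso
    -- the lift of f ∘ f normalized to have the fixed point x₀
    set ψ : ℝ → ℝ := fun x => F (F x) - m with hψ
    have hψmono : StrictMono ψ := fun x y hxy =>
      sub_lt_sub_right (hFmono (hFmono hxy)) _
    have hψcont : Continuous ψ := (hFcont.comp hFcont).sub continuous_const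
    have hψper : ∀ x, ψ (x + 1) = ψ x + 1 := by
      intro x
      show F (F (x + 1)) - m = F (F x) - m + 1
      rw [hFper x, hFper (F x)]
      ring
    have hψfix : ψ x₀ = x₀ := by simp only [hψ, hx₀]; ring
    -- continuity and measurability of f
    have hfcont : Continuous f := by
      rw [(QuotientAddGroup.isQuotientMap_mk (AddSubgroup.zmultiples (1:ℝ))).continuous_iff]
      have hcomp : f ∘ (QuotientAddGroup.mk : ℝ → AddCircle (1:ℝ))
          = fun x : ℝ => ((F x : ℝ) : AddCircle (1:ℝ)) := funext hf
      rw [hcomp]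
      exact continuous_quotient_mk'.comp hFcont
    have hfmeas : Measurable f := hfcont.measurable
    set g : AddCircle (1:ℝ) → AddCircle (1:ℝ) := f ∘ f with hgdef
    have hgmeas : Measurable g := hfmeas.comp hfmeas
    have hg : ∀ x : ℝ, g (x : AddCircle (1:ℝ)) = ((ψ x : ℝ) : AddCircle (1:ℝ)) := by
      intro x
      show f (f (x : AddCircle (1:ℝ))) = _
      rw [hf, hf]
      exact coe_circle_eq_iff_stmt9.2 ⟨-m, by simp only [hψ]; push_cast; ring⟩
    have hginv : Measure.map g μ = μ := by
      rw [hgdef, ← Measure.map_map hfmeas hfmeas, hinv, hinv]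
    -- the set of fixed points of ψ is countable
    have hχ : ∀ x, AnalyticAt ℝ (fun y => ψ y - y) x := by
      intro x
      have h1 : AnalyticAt ℝ (fun y => F (F y)) x := (hFan (F x)).comp (hFan x)
      have h2 : AnalyticAt ℝ (fun y : ℝ => (m:ℝ) + y) x :=
        analyticAt_const.add (analyticAt_id)
      have h3 : AnalyticAt ℝ (fun y => F (F y) - ((m:ℝ) + y)) x := h1.sub h2
      simp only [hψ]
      simpa only [sub_sub] using h3
    have hχne : ¬ ∀ x, ψ x - x = 0 := by
      intro hcon
      exact hzero fun x => by have := hcon x; simp only [hψ] at this; linarith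
    have hZc : {x : ℝ | ψ x = x}.Countable := by
      have hcz := countable_zeros_stmt9 hχ hχne
      have hset : {x : ℝ | ψ x = x} = {x : ℝ | ψ x - x = 0} := by
        ext x; simp [sub_eq_zero]
      rw [hset]
      exact hcz
    -- the image of the fixed set is null
    haveI : NullSingletonClass (volume : Measure (AddCircle (1:ℝ))) := noAtoms_circle_stmt9
    have hμZ : μ (((↑) : ℝ → AddCircle (1:ℝ)) '' {x : ℝ | ψ x = x}) = 0 :=
      hac ((hZc.image _).measure_zero _)
    -- covering of the circle
    have hcover : (Set.univ : Set (AddCircle (1:ℝ)))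
        ⊆ ((((↑) : ℝ → AddCircle (1:ℝ)) '' {x : ℝ | ψ x = x})
          ∪ (⋃ q : ℚ, ((↑) : ℝ → AddCircle (1:ℝ)) '' Set.Ioc (q:ℝ) (ψ q)))
          ∪ (⋃ q : ℚ, ((↑) : ℝ → AddCircle (1:ℝ)) '' Set.Ico (ψ q) (q:ℝ)) := by
      rintro z -
      refine QuotientAddGroup.induction_on z (fun y => ?_)
      rcases lt_trichotomy (ψ y) y with h | h | h
      · -- find rational q slightly above y with ψ q < y
        right
        have hU : IsOpen {t : ℝ | ψ t < y} := isOpen_lt hψcont continuous_const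
        obtain ⟨ε, hε, hball⟩ := Metric.isOpen_iff.1 hU y h
        obtain ⟨q, hq1, hq2⟩ := exists_rat_btwn (show y < y + ε by linarith)
        have hqU : ψ q < y := hball (show dist (q:ℝ) y < ε by
          rw [Real.dist_eq, abs_of_pos (by linarith)]; linarith)
        refine Set.mem_iUnion.2 ⟨q, ⟨y, ⟨le_of_lt hqU, hq1⟩, rfl⟩⟩
      · left; left
        exact ⟨y, h, rfl⟩
      · -- find rational q slightly below y with ψ q > y
        left; right
        have hU : IsOpen {t : ℝ | y < ψ t} := isOpen_lt continuous_const hψcont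
        obtain ⟨ε, hε, hball⟩ := Metric.isOpen_iff.1 hU y h
        obtain ⟨q, hq1, hq2⟩ := exists_rat_btwn (show y - ε < y by linarith)
        have hqU : y < ψ q := hball (show dist (q:ℝ) y < ε by
          rw [Real.dist_eq, abs_of_neg (by linarith)]; linarith)
        refine Set.mem_iUnion.2 ⟨q, ⟨y, ⟨hq2, le_of_lt hqU⟩, rfl⟩⟩
    have hup : ∀ q : ℚ, μ (((↑) : ℝ → AddCircle (1:ℝ)) '' Set.Ioc (q:ℝ) (ψ q)) = 0 := by
      intro q
      rcases lt_or_ge (q:ℝ) (ψ q) with h | h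
      · exact wandering_null_up_stmt9 ψ hψmono hψcont hψper g hg hgmeas μ hginv x₀ hψfix q h
      · rw [Set.Ioc_eq_empty (not_lt.2 h), Set.image_empty, measure_empty]
    have hdown : ∀ q : ℚ, μ (((↑) : ℝ → AddCircle (1:ℝ)) '' Set.Ico (ψ q) (q:ℝ)) = 0 := by
      intro q
      rcases lt_or_ge (ψ q) (q:ℝ) with h | h
      · exact wandering_null_down_stmt9 ψ hψmono hψcont hψper g hg hgmeas μ hginv x₀ hψfix q h
      · rw [Set.Ico_eq_empty (not_lt.2 h), Set.image_empty, measure_empty]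
    have huniv : μ Set.univ = 0 := by
      refine measure_mono_null hcover ?_
      refine measure_union_null (measure_union_null hμZ ?_) ?_
      · exact measure_iUnion_null hup
      · exact measure_iUnion_null hdown
    exact hμ (Measure.measure_univ_eq_zero.1 huniv)
end
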